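/- Let (Ω, ℱ, P) be a probability space, ε > 0, (L_k)_{k≥0} nonnegative integrable random variables, (τ_k)_{k≥0} random variables with τ_0 ≥ 0 and τ_{k+1} − τ_k ≥ 1 almost surely for all k, and σ a random variable with values in ℕ ∪ {∞}. Suppose that for every k ≥ 0: E[(L_{k+1} − L_k)·1{k < σ}] ≤ −ε·E[(τ_{k+1} − τ_k)·1{k < σ}]. Then E[σ] ≤ E[L_0]/ε, so in particular σ < ∞ almost surely, and E[τ_σ] ≤ E[τ_0] + E[L_0]/ε, where τ_σ(ω) = τ_{σ(ω)}(ω). -/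

import Mathlib

open MeasureTheory ENNReal

lemma enat_toENNReal_eq_tsum (n : ℕ∞) :
    (ENat.toENNReal n) = ∑' k : ℕ, (if (k : ℕ∞) < n then (1 : ℝ≥0∞) else 0) := by
  induction n using ENat.recTopCoe with
  | top =>
    rw [show (fun k : ℕ => (if (k : ℕ∞) < ⊤ then (1 : ℝ≥0∞) else 0)) = fun _ => (1 : ℝ≥0∞) by
      funext k; simp [(ENat.coe_ne_top k).lt_top]]
    simp [tsum_const_eq_top_of_ne_zero (one_ne_zero)]
  | coe m =>
    have h1 : (∑' k : ℕ, (if (k : ℕ∞) < (m : ℕ∞) then (1 : ℝ≥0∞) else 0))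
        = ∑ k ∈ Finset.range m, (if (k : ℕ∞) < (m : ℕ∞) then (1 : ℝ≥0∞) else 0) :=
      tsum_eq_sum (fun k hk => by
        simp only [Finset.mem_range, not_lt] at hk
        have : ¬ ((k : ℕ∞) < (m : ℕ∞)) := by exact_mod_cast not_lt.mpr hk
        simp [this])
    have h2 : (∑ k ∈ Finset.range m, (if (k : ℕ∞) < (m : ℕ∞) then (1 : ℝ≥0∞) else 0))
        = ∑ _k ∈ Finset.range m, (1 : ℝ≥0∞) :=
      Finset.sum_congr rfl (fun k hk => by
        simp only [Finset.mem_range] at hk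
        have : (k : ℕ∞) < (m : ℕ∞) := by exact_mod_cast hk
        simp [this])
    rw [h1, h2]
    simp

theorem abstract_drift_criterion
    {Ω : Type} [MeasurableSpace Ω] (P : Measure Ω) [IsProbabilityMeasure P]
    (ε : ℝ) (hε : 0 < ε)
    (L : ℕ → Ω → ℝ) (hL_meas : ∀ k, Measurable (L k))
    (hL_nn : ∀ k, 0 ≤ᵐ[P] L k) (hL_int : ∀ k, Integrable (L k) P)
    (τ : ℕ → Ω → ℝ) (hτ_meas : ∀ k, Measurable (τ k))
    (hτ0 : ∀ᵐ ω ∂P, 0 ≤ τ 0 ω)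
    (hτ_inc : ∀ k, ∀ᵐ ω ∂P, 1 ≤ τ (k + 1) ω - τ k ω)
    (σ : Ω → ℕ∞) (hσ_meas : Measurable σ)
    (hdrift : ∀ k : ℕ,
      ∫⁻ ω in {ω | (k : ℕ∞) < σ ω},
          (ENNReal.ofReal (L (k + 1) ω)
            + ENNReal.ofReal ε * ENNReal.ofReal (τ (k + 1) ω - τ k ω)) ∂P
        ≤ ∫⁻ ω in {ω | (k : ℕ∞) < σ ω}, ENNReal.ofReal (L k ω) ∂P) :
    (∫⁻ ω, (ENat.toENNReal (σ ω)) ∂P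
        ≤ (∫⁻ ω, ENNReal.ofReal (L 0 ω) ∂P) / ENNReal.ofReal ε) ∧
    (∀ᵐ ω ∂P, σ ω < ⊤) ∧
    (∫⁻ ω, ENNReal.ofReal (τ (σ ω).toNat ω) ∂P
        ≤ ∫⁻ ω, ENNReal.ofReal (τ 0 ω) ∂P
          + (∫⁻ ω, ENNReal.ofReal (L 0 ω) ∂P) / ENNReal.ofReal ε) := by
  have hε0 : ENNReal.ofReal ε ≠ 0 := by simp [hε]
  have hεtop : ENNReal.ofReal ε ≠ ⊤ := ofReal_ne_top
  set M := ∫⁻ ω, ENNReal.ofReal (L 0 ω) ∂P with hM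
  have hS : ∀ k : ℕ, MeasurableSet {ω | (k : ℕ∞) < σ ω} :=
    fun k => hσ_meas (by measurability : MeasurableSet {m : ℕ∞ | (k : ℕ∞) < m})
  set a : ℕ → ℝ≥0∞ :=
    fun k => ∫⁻ ω in {ω | (k : ℕ∞) < σ ω}, ENNReal.ofReal (L k ω) ∂P with ha
  set b : ℕ → ℝ≥0∞ :=
    fun k => ∫⁻ ω in {ω | (k : ℕ∞) < σ ω}, ENNReal.ofReal (τ (k + 1) ω - τ k ω) ∂P with hb
  have hsub : ∀ k : ℕ, {ω | ((k + 1 : ℕ) : ℕ∞) < σ ω} ⊆ {ω | (k : ℕ∞) < σ ω} := by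
    intro k ω hω
    have hkk : (k : ℕ∞) < ((k + 1 : ℕ) : ℕ∞) := by exact_mod_cast Nat.lt_succ_self k
    exact hkk.trans hω
  have key : ∀ k, a (k + 1) + ENNReal.ofReal ε * b k ≤ a k := by
    intro k
    have h1 : a (k + 1) ≤ ∫⁻ ω in {ω | (k : ℕ∞) < σ ω}, ENNReal.ofReal (L (k + 1) ω) ∂P :=
      lintegral_mono_set (hsub k)
    have h2 : (∫⁻ ω in {ω | (k : ℕ∞) < σ ω}, ENNReal.ofReal (L (k + 1) ω) ∂P)
        + ENNReal.ofReal ε * b k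
        = ∫⁻ ω in {ω | (k : ℕ∞) < σ ω},
            (ENNReal.ofReal (L (k + 1) ω)
              + ENNReal.ofReal ε * ENNReal.ofReal (τ (k + 1) ω - τ k ω)) ∂P := by
      rw [lintegral_add_left ((hL_meas (k + 1)).ennreal_ofReal),
        lintegral_const_mul _ (f := fun ω => ENNReal.ofReal (τ (k + 1) ω - τ k ω)) (((hτ_meas (k + 1)).sub (hτ_meas k)).ennreal_ofReal)]
    calc a (k + 1) + ENNReal.ofReal ε * b k
        ≤ (∫⁻ ω in {ω | (k : ℕ∞) < σ ω}, ENNReal.ofReal (L (k + 1) ω) ∂P)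
            + ENNReal.ofReal ε * b k := add_le_add_left h1 _
      _ = _ := h2
      _ ≤ a k := hdrift k
  have main : ∀ n, a n + ENNReal.ofReal ε * ∑ k ∈ Finset.range n, b k ≤ M := by
    intro n
    induction n with
    | zero => simpa using (setLIntegral_le_lintegral _ _)
    | succ n ih =>
      calc a (n + 1) + ENNReal.ofReal ε * ∑ k ∈ Finset.range (n + 1), b k
          = (a (n + 1) + ENNReal.ofReal ε * b n)
              + ENNReal.ofReal ε * ∑ k ∈ Finset.range n, b k := by
            rw [Finset.sum_range_succ, mul_add]; ring
        _ ≤ a n + ENNReal.ofReal ε * ∑ k ∈ Finset.range n, b k :=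
            add_le_add_left (key n) _
        _ ≤ M := ih
  have hbsum : ∑' k, b k ≤ M / ENNReal.ofReal ε := by
    rw [ENNReal.tsum_eq_iSup_sum]
    refine iSup_le fun s => ?_
    obtain ⟨n, hn⟩ := s.exists_nat_subset_range
    refine le_trans (Finset.sum_le_sum_of_subset hn) ?_
    rw [ENNReal.le_div_iff_mul_le (Or.inl hε0) (Or.inl hεtop), mul_comm]
    exact le_trans le_add_self (main n)
  -- P {k < σ} ≤ b k
  have hPb : ∀ k : ℕ, P {ω | (k : ℕ∞) < σ ω} ≤ b k := by
    intro k
    rw [← lintegral_indicator_one (hS k)]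
    rw [lintegral_indicator (hS k)]
    refine lintegral_mono_ae (ae_restrict_of_ae ?_)
    filter_upwards [hτ_inc k] with ω hω
    simp only [Pi.one_apply]
    rw [show (1 : ℝ≥0∞) = ENNReal.ofReal 1 by simp]
    exact ENNReal.ofReal_le_ofReal hω
  -- ∫ σ = ∑ P
  have hσint : ∫⁻ ω, (ENat.toENNReal (σ ω)) ∂P = ∑' k : ℕ, P {ω | (k : ℕ∞) < σ ω} := by
    have : ∀ ω, (ENat.toENNReal (σ ω))
        = ∑' k : ℕ, ({ω | (k : ℕ∞) < σ ω}).indicator (fun _ => (1 : ℝ≥0∞)) ω := by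
      intro ω
      rw [enat_toENNReal_eq_tsum (σ ω)]
      congr 1; ext k; simp [Set.indicator_apply, Set.mem_setOf_eq]
    simp_rw [this]
    rw [lintegral_tsum (fun k =>
      ((measurable_const.indicator (hS k)).aemeasurable))]
    congr 1; ext k
    exact lintegral_indicator_one (hS k)
  have goal1 : ∫⁻ ω, (ENat.toENNReal (σ ω)) ∂P ≤ M / ENNReal.ofReal ε := by
    rw [hσint]
    exact le_trans (ENNReal.tsum_le_tsum hPb) hbsum
  have hMlt : M < ⊤ := by
    have h := (hL_int 0).hasFiniteIntegral
    refine lt_of_le_of_lt ?_ h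
    refine lintegral_mono fun ω => ?_
    rw [← ofReal_norm]
    exact ENNReal.ofReal_le_ofReal (le_abs_self _)
  have goal2 : ∀ᵐ ω ∂P, σ ω < ⊤ := by
    have hlt : ∫⁻ ω, (ENat.toENNReal (σ ω)) ∂P ≠ ⊤ := by
      refine ne_of_lt (lt_of_le_of_lt goal1 ?_)
      exact ENNReal.div_lt_top hMlt.ne hε0
    have hmeas : Measurable (fun ω => (ENat.toENNReal (σ ω))) :=
      (measurable_of_countable _).comp hσ_meas
    have := ae_lt_top hmeas hlt
    filter_upwards [this] with ω hω
    rw [lt_top_iff_ne_top] at hω ⊢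
    intro hn; exact hω (by rw [hn]; simp)
  refine ⟨goal1, goal2, ?_⟩
  -- part 3
  have hptwise : ∀ᵐ ω ∂P, ENNReal.ofReal (τ (σ ω).toNat ω)
      ≤ ENNReal.ofReal (τ 0 ω)
        + ∑' k : ℕ, ({ω | (k : ℕ∞) < σ ω}).indicator
            (fun ω => ENNReal.ofReal (τ (k + 1) ω - τ k ω)) ω := by
    have hinc : ∀ᵐ ω ∂P, ∀ k, 1 ≤ τ (k + 1) ω - τ k ω := ae_all_iff.2 hτ_inc
    filter_upwards [goal2, hinc] with ω hσω hincω
    obtain ⟨n, hn⟩ : ∃ n : ℕ, σ ω = (n : ℕ∞) := by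
      lift σ ω to ℕ using hσω.ne with n; exact ⟨n, rfl⟩
    have htoNat : (σ ω).toNat = n := by rw [hn]; simp
    rw [htoNat]
    have htel : τ n ω = τ 0 ω + ∑ k ∈ Finset.range n, (τ (k + 1) ω - τ k ω) := by
      rw [Finset.sum_range_sub (fun k => τ k ω)]; ring
    calc ENNReal.ofReal (τ n ω)
        ≤ ENNReal.ofReal (τ 0 ω)
            + ENNReal.ofReal (∑ k ∈ Finset.range n, (τ (k + 1) ω - τ k ω)) := by
          rw [htel]; exact ENNReal.ofReal_add_le
      _ = ENNReal.ofReal (τ 0 ω)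
            + ∑ k ∈ Finset.range n, ENNReal.ofReal (τ (k + 1) ω - τ k ω) := by
          rw [ENNReal.ofReal_sum_of_nonneg (fun k _ => le_trans zero_le_one (hincω k))]
      _ ≤ _ := by
          refine add_le_add_right ?_ _
          refine le_trans ?_ (ENNReal.sum_le_tsum (Finset.range n))
          refine Finset.sum_le_sum fun k hk => ?_
          have hkσ : (k : ℕ∞) < σ ω := by
            rw [hn]; exact_mod_cast Finset.mem_range.mp hk
          rw [Set.indicator_of_mem (show ω ∈ {ω | (k : ℕ∞) < σ ω} from hkσ)]
  calc ∫⁻ ω, ENNReal.ofReal (τ (σ ω).toNat ω) ∂P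
      ≤ ∫⁻ ω, (ENNReal.ofReal (τ 0 ω)
          + ∑' k : ℕ, ({ω | (k : ℕ∞) < σ ω}).indicator
              (fun ω => ENNReal.ofReal (τ (k + 1) ω - τ k ω)) ω) ∂P :=
        lintegral_mono_ae hptwise
    _ = (∫⁻ ω, ENNReal.ofReal (τ 0 ω) ∂P)
          + ∑' k : ℕ, ∫⁻ ω, ({ω | (k : ℕ∞) < σ ω}).indicator
              (fun ω => ENNReal.ofReal (τ (k + 1) ω - τ k ω)) ω ∂P := by
        rw [lintegral_add_left ((hτ_meas 0).ennreal_ofReal)]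
        rw [lintegral_tsum (f := fun (k : ℕ) => ({ω | (k : ℕ∞) < σ ω}).indicator (fun ω => ENNReal.ofReal (τ (k + 1) ω - τ k ω))) (fun k =>
          ((((hτ_meas (k + 1)).sub (hτ_meas k)).ennreal_ofReal).indicator (hS k)).aemeasurable)]
    _ = (∫⁻ ω, ENNReal.ofReal (τ 0 ω) ∂P) + ∑' k, b k := by
        congr 1; congr 1; ext k
        exact lintegral_indicator (hS k) _
    _ ≤ _ := add_le_add_right hbsum _
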